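/- Fix t > 0, h ∈ H, γ ∈ (1/3,1/2) so 2γ < 1. Let (Y,Y') be controlled by X ∈ C^γ according to the selfadjoint semigroup S in H_{−2γ}: Y_v − S_{v−u}Y_u = S_{v−u}Y'_u X_{v,u} + R^Y_{v,u} with ‖R^Y_{v,u}‖_{H_{−2γ}} ≤ C_R|v−u|^{2γ}, Y ∈ L^∞([0,t],H), Y' ∈ L^∞([0,t],H^d), and suppose ‖S_r w‖_H ≤ C r^{−2γ}‖w‖_{H_{−2γ}} for r ∈ (0,t]. Define Z_v = ∫_v^t ⟨S_{s−v}Y_v, h⟩ ds and Z'_v = ∫_v^t ⟨S_{s−v}Y'_v, h⟩ ds. Then (Z,Z') is a classically controlled rough path: Z_v − Z_u = Z'_u X_{v,u} + R^Z_{v,u} with R^Z_{v,u} = ∫_v^t ⟨S_{s−v}R^Y_{v,u}, h⟩ ds − ∫_u^v ⟨S_{s−u}Y_u, h⟩ ds − ∫_u^v ⟨S_{s−u}Y'_u, h⟩ ds · X_{v,u}, and |R^Z_{v,u}| ≲ (C_R t^{1−2γ} + ‖Y‖_∞ + ‖Y'‖_∞ |X|_γ) ‖h‖ |v−u|^{2γ}.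 -/

import Mathlib

set_option maxHeartbeats 1000000

open Finset
open scoped RealInnerProductSpace

/-!
STATEMENT 11: For `(Y, Y')` controlled by `X` according to the selfadjoint semigroup `S`
in `H_{−2γ}` (with `Y ∈ L^∞([0,t],H)`, `Y' ∈ L^∞([0,t],H^d)`), `h ∈ H` and
`Z_v = ∫_v^t ⟨S_{s−v}Y_v, h⟩ ds`, `Z'_v = ∫_v^t ⟨S_{s−v}Y'_v, h⟩ ds`, the pair `(Z,Z')`
is a classically controlled rough path with the explicit remainder
`R^Z_{v,u} = ∫_v^t ⟨S_{s−v}R^Y_{v,u}, h⟩ ds − ∫_u^v ⟨S_{s−u}Y_u, h⟩ ds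
            − (∫_u^v ⟨S_{s−u}Y'_u, h⟩ ds)·X_{v,u}`
and `|R^Z_{v,u}| ≲ (C_R t^{1−2γ} + ‖Y‖_∞ + ‖Y'‖_∞ |X|_γ) ‖h‖ |v−u|^{2γ}`.
Model: `H` real Hilbert, `E` normed (= `H_{−2γ}`) with embedding `ι : H → E`; for
`r > 0` the smoothing extension `Sh r : E → H` of `S r` satisfies
`‖Sh r w‖ ≤ C r^{−2γ} ‖w‖_E` and `Sh r (ι u) = S r u`.
-/
theorem time_integrated_pairing_is_controlled
    {H E : Type*} [NormedAddCommGroup H] [InnerProductSpace ℝ H]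
    [NormedAddCommGroup E] [NormedSpace ℝ E]
    (d : ℕ) (γ t C CR MY MY' CX : ℝ)
    (hγ1 : 1 / 3 < γ) (hγ2 : γ < 1 / 2) (ht : 0 < t)
    (hC : 0 ≤ C) (hCR : 0 ≤ CR) (hMY : 0 ≤ MY) (hMY' : 0 ≤ MY') (hCX : 0 ≤ CX)
    (S : ℝ → H →L[ℝ] H) (Sh : ℝ → E →L[ℝ] H) (ι : H →L[ℝ] E)
    (hS0 : S 0 = ContinuousLinearMap.id ℝ H)
    (hSadd : ∀ a b : ℝ, 0 ≤ a → 0 ≤ b → S (a + b) = (S a).comp (S b))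
    (hScont : ∀ u : H, Continuous fun r => S r u)
    (hSb : ∀ r : ℝ, 0 ≤ r → r ≤ t → ‖S r‖ ≤ C)
    (hrestr : ∀ r : ℝ, 0 < r → ∀ u : H, Sh r (ι u) = S r u)
    (hShb : ∀ r : ℝ, 0 < r → r ≤ t → ∀ w : E, ‖Sh r w‖ ≤ C * r ^ (-(2 * γ)) * ‖w‖)
    (hShcont : ∀ w : E, ContinuousOn (fun r => Sh r w) (Set.Ioi (0 : ℝ)))
    (X : ℝ → ℝ → Fin d → ℝ)
    (hX : ∀ u v : ℝ, 0 ≤ u → u ≤ v → v ≤ t → ‖X v u‖ ≤ CX * (v - u) ^ γ)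
    (Y : ℝ → H) (Y' : ℝ → Fin d → H) (RY : ℝ → ℝ → E)
    (hYb : ∀ r : ℝ, 0 ≤ r → r ≤ t → ‖Y r‖ ≤ MY)
    (hY'b : ∀ (r : ℝ) (i : Fin d), 0 ≤ r → r ≤ t → ‖Y' r i‖ ≤ MY')
    (hctrl : ∀ u v : ℝ, 0 ≤ u → u ≤ v → v ≤ t →
      ι (Y v) = ι (S (v - u) (Y u)) + (∑ i, X v u i • ι (S (v - u) (Y' u i))) + RY v u)
    (hRb : ∀ u v : ℝ, 0 ≤ u → u ≤ v → v ≤ t → ‖RY v u‖ ≤ CR * (v - u) ^ (2 * γ))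
    (h : H) :
    ∃ C' : ℝ, 0 ≤ C' ∧ ∀ u v : ℝ, 0 ≤ u → u ≤ v → v ≤ t →
      ((∫ s in v..t, ⟪S (s - v) (Y v), h⟫) - (∫ s in u..t, ⟪S (s - u) (Y u), h⟫)
          = (∑ i, X v u i * ∫ s in u..t, ⟪S (s - u) (Y' u i), h⟫)
            + ((∫ s in v..t, ⟪Sh (s - v) (RY v u), h⟫)
                - (∫ s in u..v, ⟪S (s - u) (Y u), h⟫)
                - ∑ i, (∫ s in u..v, ⟪S (s - u) (Y' u i), h⟫) * X v u i)) ∧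
      |(∫ s in v..t, ⟪Sh (s - v) (RY v u), h⟫)
          - (∫ s in u..v, ⟪S (s - u) (Y u), h⟫)
          - ∑ i, (∫ s in u..v, ⟪S (s - u) (Y' u i), h⟫) * X v u i|
        ≤ C' * (CR * t ^ (1 - 2 * γ) + MY + MY' * CX) * ‖h‖ * (v - u) ^ (2 * γ) := by
  have hγ0 : (0:ℝ) < γ := by linarith
  have h1m : (0:ℝ) < 1 - 2 * γ := by linarith
  have hA1 : (0:ℝ) ≤ C / (1 - 2 * γ) := by positivity
  have hA2 : (0:ℝ) ≤ C * t ^ (1 - 2 * γ) := by positivity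
  have hA3 : (0:ℝ) ≤ (d : ℝ) * C * t ^ (1 - γ) := by positivity
  refine ⟨C / (1 - 2 * γ) + C * t ^ (1 - 2 * γ) + (d : ℝ) * C * t ^ (1 - γ), by positivity, ?_⟩
  intro u v hu huv hvt
  have hv0 : 0 ≤ v := le_trans hu huv
  have hut : u ≤ t := le_trans huv hvt
  have hΔ0 : 0 ≤ v - u := by linarith
  have hΔt : v - u ≤ t := by linarith
  have hP0 : 0 ≤ (v - u) ^ (2 * γ) := Real.rpow_nonneg hΔ0 _
  -- continuity of the semigroup integrands
  have contS : ∀ (a : ℝ) (w : H), Continuous fun s : ℝ => (⟪S (s - a) w, h⟫ : ℝ) := by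
    intro a w
    exact Continuous.inner ((hScont w).comp (continuous_sub_right a)) continuous_const
  have intS : ∀ (a b₁ b₂ : ℝ) (w : H),
      IntervalIntegrable (fun s => (⟪S (s - a) w, h⟫ : ℝ)) MeasureTheory.volume b₁ b₂ :=
    fun a b₁ b₂ w => (contS a w).intervalIntegrable b₁ b₂
  -- pointwise identity for s ∈ (v, t]
  have key : ∀ s : ℝ, v < s → s ≤ t →
      (⟪Sh (s - v) (RY v u), h⟫ : ℝ)
        = ⟪S (s - v) (Y v), h⟫ - ⟪S (s - u) (Y u), h⟫
          - ∑ i, X v u i * ⟪S (s - u) (Y' u i), h⟫ := by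
    intro s hvs hst
    have hsv : 0 < s - v := by linarith
    have hcomp : ∀ w : H, S (s - v) (S (v - u) w) = S (s - u) w := by
      intro w
      have h' := hSadd (s - v) (v - u) (le_of_lt hsv) hΔ0
      have e : s - v + (v - u) = s - u := by ring
      rw [e] at h'
      rw [h']
      rfl
    have hc := congrArg (Sh (s - v)) (hctrl u v hu huv hvt)
    rw [hrestr _ hsv] at hc
    simp only [map_add, map_sum, map_smul, hrestr _ hsv, hcomp] at hc
    have h2 : (⟪S (s - v) (Y v), h⟫ : ℝ)
        = ⟪S (s - u) (Y u), h⟫ + (∑ i, X v u i * ⟪S (s - u) (Y' u i), h⟫)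
          + ⟪Sh (s - v) (RY v u), h⟫ := by
      rw [hc]
      simp [inner_add_left, sum_inner, real_inner_smul_left]
    linarith
  -- the rough-kernel integral agrees with a continuous one
  have hΙvt : Set.uIoc v t = Set.Ioc v t := Set.uIoc_of_le hvt
  have key2 : (∫ s in v..t, (⟪Sh (s - v) (RY v u), h⟫ : ℝ))
      = ∫ s in v..t, ((⟪S (s - v) (Y v), h⟫ : ℝ) - ⟪S (s - u) (Y u), h⟫
          - ∑ i, X v u i * ⟪S (s - u) (Y' u i), h⟫) := by
    apply intervalIntegral.integral_congr_ae
    filter_upwards with s hs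
    rw [hΙvt] at hs
    exact key s hs.1 hs.2
  have contSum : Continuous fun s : ℝ => ∑ i, X v u i * (⟪S (s - u) (Y' u i), h⟫ : ℝ) :=
    continuous_finset_sum _ fun i _ => continuous_const.mul (contS u (Y' u i))
  have split : (∫ s in v..t, ((⟪S (s - v) (Y v), h⟫ : ℝ) - ⟪S (s - u) (Y u), h⟫
          - ∑ i, X v u i * ⟪S (s - u) (Y' u i), h⟫))
      = (∫ s in v..t, (⟪S (s - v) (Y v), h⟫ : ℝ))
        - (∫ s in v..t, (⟪S (s - u) (Y u), h⟫ : ℝ))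
        - ∑ i, X v u i * ∫ s in v..t, (⟪S (s - u) (Y' u i), h⟫ : ℝ) := by
    rw [intervalIntegral.integral_sub (f := fun s => (⟪S (s - v) (Y v), h⟫ : ℝ) - ⟪S (s - u) (Y u), h⟫)
        (((contS v (Y v)).sub (contS u (Y u))).intervalIntegrable v t)
        (contSum.intervalIntegrable v t),
      intervalIntegral.integral_sub (intS v v t (Y v)) (intS u v t (Y u)),
      intervalIntegral.integral_finset_sum (f := fun i s => X v u i * (⟪S (s - u) (Y' u i), h⟫ : ℝ))
        (fun i _ => (continuous_const.mul (contS u (Y' u i))).intervalIntegrable v t)]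
    simp only [intervalIntegral.integral_const_mul]
  constructor
  · -- the algebraic identity
    have e2 : (∫ s in u..v, (⟪S (s - u) (Y u), h⟫ : ℝ)) + ∫ s in v..t, (⟪S (s - u) (Y u), h⟫ : ℝ)
        = ∫ s in u..t, (⟪S (s - u) (Y u), h⟫ : ℝ) :=
      intervalIntegral.integral_add_adjacent_intervals (intS u u v (Y u)) (intS u v t (Y u))
    have e3 : (∑ i, X v u i * ∫ s in u..t, (⟪S (s - u) (Y' u i), h⟫ : ℝ))
        = (∑ i, X v u i * ∫ s in u..v, (⟪S (s - u) (Y' u i), h⟫ : ℝ))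
          + ∑ i, X v u i * ∫ s in v..t, (⟪S (s - u) (Y' u i), h⟫ : ℝ) := by
      rw [← Finset.sum_add_distrib]
      refine Finset.sum_congr rfl fun i _ => ?_
      rw [← mul_add,
        intervalIntegral.integral_add_adjacent_intervals (intS u u v (Y' u i)) (intS u v t (Y' u i))]
    have e4 : (∑ i, (∫ s in u..v, (⟪S (s - u) (Y' u i), h⟫ : ℝ)) * X v u i)
        = ∑ i, X v u i * ∫ s in u..v, (⟪S (s - u) (Y' u i), h⟫ : ℝ) :=
      Finset.sum_congr rfl fun i _ => mul_comm _ _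
    rw [key2, split, ← e2, e3, e4]
    ring
  · -- the quantitative bound
    -- bound on the smoothing term
    have hbnd_int : IntervalIntegrable
        (fun s : ℝ => C * (CR * (v - u) ^ (2 * γ)) * ‖h‖ * (s - v) ^ (-(2 * γ)))
        MeasureTheory.volume v t := by
      apply IntervalIntegrable.const_mul
      have h0 : IntervalIntegrable (fun x : ℝ => x ^ (-(2 * γ))) MeasureTheory.volume 0 (t - v) :=
        intervalIntegral.intervalIntegrable_rpow' (by linarith)
      have h1 := h0.comp_sub_right v
      simpa using h1
    have B1 : |∫ s in v..t, (⟪Sh (s - v) (RY v u), h⟫ : ℝ)|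
        ≤ C / (1 - 2 * γ) * (CR * t ^ (1 - 2 * γ)) * ‖h‖ * (v - u) ^ (2 * γ) := by
      rw [key2]
      have hae : ∀ᵐ s ∂(MeasureTheory.volume.restrict (Set.uIoc v t)),
          ‖(⟪S (s - v) (Y v), h⟫ : ℝ) - ⟪S (s - u) (Y u), h⟫
            - ∑ i, X v u i * ⟪S (s - u) (Y' u i), h⟫‖
          ≤ C * (CR * (v - u) ^ (2 * γ)) * ‖h‖ * (s - v) ^ (-(2 * γ)) := by
        refine MeasureTheory.ae_restrict_of_forall_mem measurableSet_uIoc fun s hs => ?_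
        rw [hΙvt] at hs
        rw [← key s hs.1 hs.2, Real.norm_eq_abs]
        have hsv : 0 < s - v := by linarith [hs.1]
        have hsvt : s - v ≤ t := by linarith [hs.2]
        have hr0 : (0:ℝ) ≤ (s - v) ^ (-(2 * γ)) := Real.rpow_nonneg (le_of_lt hsv) _
        calc |(⟪Sh (s - v) (RY v u), h⟫ : ℝ)| ≤ ‖Sh (s - v) (RY v u)‖ * ‖h‖ :=
              abs_real_inner_le_norm _ _
          _ ≤ (C * (s - v) ^ (-(2 * γ)) * ‖RY v u‖) * ‖h‖ :=
              mul_le_mul_of_nonneg_right (hShb _ hsv hsvt _) (norm_nonneg _)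
          _ ≤ (C * (s - v) ^ (-(2 * γ)) * (CR * (v - u) ^ (2 * γ))) * ‖h‖ := by
              have := hRb u v hu huv hvt
              have hcc : 0 ≤ C * (s - v) ^ (-(2 * γ)) := by positivity
              exact mul_le_mul_of_nonneg_right
                (mul_le_mul_of_nonneg_left this hcc) (norm_nonneg _)
          _ = C * (CR * (v - u) ^ (2 * γ)) * ‖h‖ * (s - v) ^ (-(2 * γ)) := by ring
      have hb := intervalIntegral.norm_integral_le_abs_of_norm_le hae hbnd_int
      have hval : (∫ s in v..t, C * (CR * (v - u) ^ (2 * γ)) * ‖h‖ * (s - v) ^ (-(2 * γ)))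
          = C * (CR * (v - u) ^ (2 * γ)) * ‖h‖ * ((t - v) ^ (1 - 2 * γ) / (1 - 2 * γ)) := by
        rw [intervalIntegral.integral_const_mul]
        congr 1
        rw [intervalIntegral.integral_comp_sub_right (fun x : ℝ => x ^ (-(2 * γ))) v, sub_self,
          integral_rpow (Or.inl (by linarith)),
          Real.zero_rpow (by intro hz; rw [← hz] at h1m; linarith),
          show -(2 * γ) + 1 = 1 - 2 * γ by ring, sub_zero]
      rw [Real.norm_eq_abs] at hb
      have htv0 : (0:ℝ) ≤ (t - v) ^ (1 - 2 * γ) := Real.rpow_nonneg (by linarith) _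
      have hvalnn : (0:ℝ) ≤ C * (CR * (v - u) ^ (2 * γ)) * ‖h‖ * ((t - v) ^ (1 - 2 * γ) / (1 - 2 * γ)) :=
        mul_nonneg (by positivity) (div_nonneg htv0 h1m.le)
      calc |∫ s in v..t, ((⟪S (s - v) (Y v), h⟫ : ℝ) - ⟪S (s - u) (Y u), h⟫
              - ∑ i, X v u i * ⟪S (s - u) (Y' u i), h⟫)|
          ≤ C * (CR * (v - u) ^ (2 * γ)) * ‖h‖ * ((t - v) ^ (1 - 2 * γ) / (1 - 2 * γ)) := by
            rw [hval] at hb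
            rwa [abs_of_nonneg hvalnn] at hb
        _ ≤ C * (CR * (v - u) ^ (2 * γ)) * ‖h‖ * (t ^ (1 - 2 * γ) / (1 - 2 * γ)) := by
            have hmono : (t - v) ^ (1 - 2 * γ) ≤ t ^ (1 - 2 * γ) :=
              Real.rpow_le_rpow (by linarith) (by linarith) (le_of_lt h1m)
            have h2 : (t - v) ^ (1 - 2 * γ) / (1 - 2 * γ) ≤ t ^ (1 - 2 * γ) / (1 - 2 * γ) :=
              (div_le_div_iff_of_pos_right h1m).mpr hmono
            exact mul_le_mul_of_nonneg_left h2 (by positivity)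
        _ = C / (1 - 2 * γ) * (CR * t ^ (1 - 2 * γ)) * ‖h‖ * (v - u) ^ (2 * γ) := by ring
    -- elementary rpow facts
    have fact1 : v - u ≤ t ^ (1 - 2 * γ) * (v - u) ^ (2 * γ) := by
      rcases eq_or_lt_of_le hΔ0 with heq | hlt
      · rw [← heq, Real.zero_rpow (ne_of_gt (by linarith : (0:ℝ) < 2 * γ)), mul_zero]
      · have h1 : (v - u) ^ (1 - 2 * γ) * (v - u) ^ (2 * γ) = v - u := by
          rw [← Real.rpow_add hlt, show 1 - 2 * γ + 2 * γ = (1:ℝ) by ring, Real.rpow_one]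
        calc v - u = (v - u) ^ (1 - 2 * γ) * (v - u) ^ (2 * γ) := h1.symm
          _ ≤ t ^ (1 - 2 * γ) * (v - u) ^ (2 * γ) :=
            mul_le_mul_of_nonneg_right (Real.rpow_le_rpow hΔ0 hΔt (le_of_lt h1m)) hP0
    have fact2 : (v - u) * (v - u) ^ γ ≤ t ^ (1 - γ) * (v - u) ^ (2 * γ) := by
      rcases eq_or_lt_of_le hΔ0 with heq | hlt
      · rw [← heq, Real.zero_rpow (ne_of_gt hγ0),
          Real.zero_rpow (ne_of_gt (by linarith : (0:ℝ) < 2 * γ)), mul_zero, mul_zero]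
      · have h1 : (v - u) ^ (1 - γ) * (v - u) ^ (2 * γ) = (v - u) * (v - u) ^ γ := by
          rw [← Real.rpow_add hlt, show 1 - γ + 2 * γ = 1 + γ by ring,
            Real.rpow_add hlt, Real.rpow_one]
        calc (v - u) * (v - u) ^ γ = (v - u) ^ (1 - γ) * (v - u) ^ (2 * γ) := h1.symm
          _ ≤ t ^ (1 - γ) * (v - u) ^ (2 * γ) :=
            mul_le_mul_of_nonneg_right (Real.rpow_le_rpow hΔ0 hΔt (by linarith)) hP0
    -- the drift term
    have B2 : |∫ s in u..v, (⟪S (s - u) (Y u), h⟫ : ℝ)|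
        ≤ C * t ^ (1 - 2 * γ) * MY * ‖h‖ * (v - u) ^ (2 * γ) := by
      have hc : ∀ x ∈ Set.uIoc u v, ‖(⟪S (x - u) (Y u), h⟫ : ℝ)‖ ≤ C * MY * ‖h‖ := by
        intro x hx
        rw [Set.uIoc_of_le huv] at hx
        rw [Real.norm_eq_abs]
        calc |(⟪S (x - u) (Y u), h⟫ : ℝ)| ≤ ‖S (x - u) (Y u)‖ * ‖h‖ :=
              abs_real_inner_le_norm _ _
          _ ≤ (C * MY) * ‖h‖ := by
              refine mul_le_mul_of_nonneg_right ?_ (norm_nonneg _)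
              refine le_trans ((S (x - u)).le_opNorm (Y u)) ?_
              exact mul_le_mul (hSb _ (by linarith [hx.1]) (by linarith [hx.2]))
                (hYb u hu hut) (norm_nonneg _) hC
      have hb := intervalIntegral.norm_integral_le_of_norm_le_const hc
      rw [Real.norm_eq_abs, abs_of_nonneg (by linarith : (0:ℝ) ≤ v - u)] at hb
      calc |∫ s in u..v, (⟪S (s - u) (Y u), h⟫ : ℝ)| ≤ C * MY * ‖h‖ * (v - u) := hb
        _ ≤ C * MY * ‖h‖ * (t ^ (1 - 2 * γ) * (v - u) ^ (2 * γ)) :=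
            mul_le_mul_of_nonneg_left fact1 (by positivity)
        _ = C * t ^ (1 - 2 * γ) * MY * ‖h‖ * (v - u) ^ (2 * γ) := by ring
    -- the Gubinelli-derivative term
    have B3 : |∑ i, (∫ s in u..v, (⟪S (s - u) (Y' u i), h⟫ : ℝ)) * X v u i|
        ≤ (d : ℝ) * C * t ^ (1 - γ) * (MY' * CX) * ‖h‖ * (v - u) ^ (2 * γ) := by
      have hterm : ∀ i : Fin d, |(∫ s in u..v, (⟪S (s - u) (Y' u i), h⟫ : ℝ)) * X v u i|
          ≤ (C * MY' * ‖h‖ * (v - u)) * (CX * (v - u) ^ γ) := by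
        intro i
        have hc : ∀ x ∈ Set.uIoc u v, ‖(⟪S (x - u) (Y' u i), h⟫ : ℝ)‖ ≤ C * MY' * ‖h‖ := by
          intro x hx
          rw [Set.uIoc_of_le huv] at hx
          rw [Real.norm_eq_abs]
          calc |(⟪S (x - u) (Y' u i), h⟫ : ℝ)| ≤ ‖S (x - u) (Y' u i)‖ * ‖h‖ :=
                abs_real_inner_le_norm _ _
            _ ≤ (C * MY') * ‖h‖ := by
                refine mul_le_mul_of_nonneg_right ?_ (norm_nonneg _)
                refine le_trans ((S (x - u)).le_opNorm (Y' u i)) ?_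
                exact mul_le_mul (hSb _ (by linarith [hx.1]) (by linarith [hx.2]))
                  (hY'b u i hu hut) (norm_nonneg _) hC
        have hb := intervalIntegral.norm_integral_le_of_norm_le_const hc
        rw [Real.norm_eq_abs, abs_of_nonneg (by linarith : (0:ℝ) ≤ v - u)] at hb
        have hxi : |X v u i| ≤ CX * (v - u) ^ γ := by
          refine le_trans ?_ (hX u v hu huv hvt)
          have := norm_le_pi_norm (X v u) i
          rwa [Real.norm_eq_abs] at this
        rw [abs_mul]
        exact mul_le_mul (by linarith [hb]) hxi (abs_nonneg _) (by positivity)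
      calc |∑ i, (∫ s in u..v, (⟪S (s - u) (Y' u i), h⟫ : ℝ)) * X v u i|
          ≤ ∑ i, |(∫ s in u..v, (⟪S (s - u) (Y' u i), h⟫ : ℝ)) * X v u i| :=
            Finset.abs_sum_le_sum_abs _ _
        _ ≤ ∑ _i : Fin d, (C * MY' * ‖h‖ * (v - u)) * (CX * (v - u) ^ γ) :=
            Finset.sum_le_sum fun i _ => hterm i
        _ = (d : ℝ) * ((C * MY' * ‖h‖ * (v - u)) * (CX * (v - u) ^ γ)) := by
            rw [Finset.sum_const, Finset.card_univ, Fintype.card_fin, nsmul_eq_mul]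
        _ = ((d : ℝ) * C * MY' * CX * ‖h‖) * ((v - u) * (v - u) ^ γ) := by ring
        _ ≤ ((d : ℝ) * C * MY' * CX * ‖h‖) * (t ^ (1 - γ) * (v - u) ^ (2 * γ)) :=
            mul_le_mul_of_nonneg_left fact2 (by positivity)
        _ = (d : ℝ) * C * t ^ (1 - γ) * (MY' * CX) * ‖h‖ * (v - u) ^ (2 * γ) := by ring
    -- combine
    have tri : |(∫ s in v..t, (⟪Sh (s - v) (RY v u), h⟫ : ℝ))
          - (∫ s in u..v, (⟪S (s - u) (Y u), h⟫ : ℝ))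
          - ∑ i, (∫ s in u..v, (⟪S (s - u) (Y' u i), h⟫ : ℝ)) * X v u i|
        ≤ |∫ s in v..t, (⟪Sh (s - v) (RY v u), h⟫ : ℝ)|
          + |∫ s in u..v, (⟪S (s - u) (Y u), h⟫ : ℝ)|
          + |∑ i, (∫ s in u..v, (⟪S (s - u) (Y' u i), h⟫ : ℝ)) * X v u i| := by
      calc _ ≤ |(∫ s in v..t, (⟪Sh (s - v) (RY v u), h⟫ : ℝ))
              - (∫ s in u..v, (⟪S (s - u) (Y u), h⟫ : ℝ))|
            + |∑ i, (∫ s in u..v, (⟪S (s - u) (Y' u i), h⟫ : ℝ)) * X v u i| := abs_sub _ _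
        _ ≤ _ := add_le_add (abs_sub _ _) le_rfl
    have ha0 : (0:ℝ) ≤ CR * t ^ (1 - 2 * γ) := by positivity
    have hc0 : (0:ℝ) ≤ MY' * CX := mul_nonneg hMY' hCX
    have core : C / (1 - 2 * γ) * (CR * t ^ (1 - 2 * γ)) + C * t ^ (1 - 2 * γ) * MY
          + (d : ℝ) * C * t ^ (1 - γ) * (MY' * CX)
        ≤ (C / (1 - 2 * γ) + C * t ^ (1 - 2 * γ) + (d : ℝ) * C * t ^ (1 - γ))
          * (CR * t ^ (1 - 2 * γ) + MY + MY' * CX) := by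
      nlinarith [mul_nonneg hA1 hMY, mul_nonneg hA1 hc0, mul_nonneg hA2 ha0,
        mul_nonneg hA2 hc0, mul_nonneg hA3 ha0, mul_nonneg hA3 hMY]
    have last : C / (1 - 2 * γ) * (CR * t ^ (1 - 2 * γ)) * ‖h‖ * (v - u) ^ (2 * γ)
          + C * t ^ (1 - 2 * γ) * MY * ‖h‖ * (v - u) ^ (2 * γ)
          + (d : ℝ) * C * t ^ (1 - γ) * (MY' * CX) * ‖h‖ * (v - u) ^ (2 * γ)
        ≤ (C / (1 - 2 * γ) + C * t ^ (1 - 2 * γ) + (d : ℝ) * C * t ^ (1 - γ))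
          * (CR * t ^ (1 - 2 * γ) + MY + MY' * CX) * ‖h‖ * (v - u) ^ (2 * γ) := by
      have hmul := mul_le_mul_of_nonneg_right core
        (mul_nonneg (norm_nonneg h) hP0)
      calc C / (1 - 2 * γ) * (CR * t ^ (1 - 2 * γ)) * ‖h‖ * (v - u) ^ (2 * γ)
            + C * t ^ (1 - 2 * γ) * MY * ‖h‖ * (v - u) ^ (2 * γ)
            + (d : ℝ) * C * t ^ (1 - γ) * (MY' * CX) * ‖h‖ * (v - u) ^ (2 * γ)
          = (C / (1 - 2 * γ) * (CR * t ^ (1 - 2 * γ)) + C * t ^ (1 - 2 * γ) * MY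
              + (d : ℝ) * C * t ^ (1 - γ) * (MY' * CX)) * (‖h‖ * (v - u) ^ (2 * γ)) := by ring
        _ ≤ ((C / (1 - 2 * γ) + C * t ^ (1 - 2 * γ) + (d : ℝ) * C * t ^ (1 - γ))
              * (CR * t ^ (1 - 2 * γ) + MY + MY' * CX)) * (‖h‖ * (v - u) ^ (2 * γ)) := hmul
        _ = _ := by ring
    linarith [tri, B1, B2, B3, last]
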